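/- For every positive integer n, the parallelogram with side lengths 1 and n√2, namely convexHull{(0,0),(1,0),(n+1,n),(n,n)} ⊆ ℝ², is tileable by 2n copies of T. -/

import Mathlib

open Real

noncomputable section

/-- The Euclidean plane `ℝ²`. -/
abbrev Pt : Type := EuclideanSpace ℝ (Fin 2)

/-- The point `(x, y)` of the plane. -/
def pt (x y : ℝ) : Pt := (WithLp.equiv 2 (Fin 2 → ℝ)).symm ![x, y]

/-- The closed isosceles right triangle with vertices `(0,0)`, `(1,0)`, `(0,1)`. -/
def T : Set Pt := convexHull ℝ {pt 0 0, pt 1 0, pt 0 1}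

/-- `S` is tileable by `n` copies of `T`: there are isometries `f₁, …, fₙ` of the plane
(possibly orientation-reversing) such that the sets `fᵢ(T)` have pairwise disjoint
interiors and their union is `S`. -/
def TileableBy (S : Set Pt) (n : ℕ) : Prop :=
  ∃ f : Fin n → (Pt ≃ᵢ Pt),
    (∀ i j, i ≠ j → Disjoint (interior (f i '' T)) (interior (f j '' T))) ∧
    S = ⋃ i, f i '' T

/-- Two subsets of the plane are congruent if some isometry maps one onto the other. -/
def CongruentSets (P Q : Set Pt) : Prop := ∃ f : Pt ≃ᵢ Pt, f '' P = Q

/-- The family of pieces `P₁, …, P_k` forms `S`: there are isometries `g₁, …, g_k` of the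
plane such that the sets `gᵢ(Pᵢ)` have pairwise disjoint interiors and their union is `S`. -/
def Forms {k : ℕ} (P : Fin k → Set Pt) (S : Set Pt) : Prop :=
  ∃ g : Fin k → (Pt ≃ᵢ Pt),
    (∀ i j, i ≠ j → Disjoint (interior (g i '' P i)) (interior (g j '' P j))) ∧
    S = ⋃ i, g i '' P i

@[simp] lemma pt_apply_0 (x y : ℝ) : pt x y 0 = x := rfl
@[simp] lemma pt_apply_1 (x y : ℝ) : pt x y 1 = y := rfl

lemma pt_eta (p : Pt) : pt (p 0) (p 1) = p := by
  ext i; fin_cases i <;> rfl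

lemma T_eq : T = {p : Pt | 0 ≤ p 0 ∧ 0 ≤ p 1 ∧ p 0 + p 1 ≤ 1} := by
  apply le_antisymm
  · apply convexHull_min
    · rintro p (rfl | rfl | rfl) <;> simp <;> norm_num
    · rintro p hp q hq a b ha hb hab
      refine ⟨?_, ?_, ?_⟩ <;>
        simp only [PiLp.add_apply, PiLp.smul_apply, smul_eq_mul] <;> nlinarith [hp.1, hp.2.1, hp.2.2, hq.1, hq.2.1, hq.2.2]
  · rintro p ⟨hx, hy, hxy⟩
    have := Finset.centerMass_mem_convexHull (t := (Finset.univ : Finset (Fin 3)))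
      (w := ![1 - p 0 - p 1, p 0, p 1]) (z := ![pt 0 0, pt 1 0, pt 0 1])
      (R := ℝ) (s := {pt 0 0, pt 1 0, pt 0 1})
      (by intro i _; fin_cases i <;> simp <;> linarith)
      (by simp [Fin.sum_univ_three]; ring_nf; norm_num)
      (by intro i _; fin_cases i <;> simp)
    convert this using 1
    · rfl
    unfold Finset.centerMass
    ext i
    fin_cases i <;>
      simp [Fin.sum_univ_three, PiLp.add_apply, PiLp.smul_apply] <;> ring

lemma interior_T : interior T = {p : Pt | 0 < p 0 ∧ 0 < p 1 ∧ p 0 + p 1 < 1} := by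
  have hcont : ∀ i : Fin 2, Continuous (fun p : Pt => p i) := fun i =>
    (continuous_apply i).comp (PiLp.continuous_ofLp 2 _)
  apply le_antisymm
  · intro p hp
    obtain ⟨ε, hε, hball⟩ := Metric.isOpen_iff.mp isOpen_interior p hp
    have hball' : Metric.ball p ε ⊆ T := hball.trans interior_subset
    have key : ∀ v : Pt, ‖v‖ < ε → p + v ∈ T := by
      intro v hv
      apply hball'
      simp [Metric.mem_ball, dist_eq_norm, hv]
    have h0 : ∀ (c : ℝ) (i : Fin 2), |c| < ε → p + c • EuclideanSpace.single i 1 ∈ T := by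
      intro c i hc
      apply key
      rw [norm_smul, EuclideanSpace.norm_single]
      simpa using hc
    have e1 : ∀ (c : ℝ) (i j : Fin 2), (p + c • EuclideanSpace.single i (1:ℝ)) j
        = p j + (if i = j then c else 0) := by
      intro c i j
      rcases eq_or_ne i j with rfl | h
      · simp [EuclideanSpace.single_apply]
      · simp only [PiLp.add_apply, PiLp.smul_apply, EuclideanSpace.single_apply, smul_eq_mul]
        rw [if_neg (Ne.symm h)]
        rw [if_neg h]; ring
    have hc : |(-(ε/2))| < ε := by rw [abs_neg, abs_of_pos (by linarith)]; linarith
    have hc2 : |(ε/2)| < ε := by rw [abs_of_pos (by linarith)]; linarith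
    have A := h0 (-(ε/2)) 0 hc
    have B := h0 (-(ε/2)) 1 hc
    have C := h0 (ε/2) 0 hc2
    rw [T_eq] at A B C
    simp only [Set.mem_setOf_eq, e1] at A B C
    norm_num at A B C
    exact ⟨by linarith [A.1], by linarith [B.2.1], by linarith [C.2.2]⟩
  · have : IsOpen {p : Pt | 0 < p 0 ∧ 0 < p 1 ∧ p 0 + p 1 < 1} := by
      apply IsOpen.inter (isOpen_lt continuous_const (hcont 0))
      apply IsOpen.inter (isOpen_lt continuous_const (hcont 1))
      exact isOpen_lt ((hcont 0).add (hcont 1)) continuous_const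
    refine this.subset_interior_iff.mpr ?_
    rw [T_eq]
    intro p hp
    exact ⟨hp.1.le, hp.2.1.le, hp.2.2.le⟩

/-- reflection-translation: (x,y) ↦ (k+1-x, y+k) -/
def F (k : ℝ) : Pt ≃ᵢ Pt where
  toFun p := pt (k + 1 - p 0) (p 1 + k)
  invFun q := pt (k + 1 - q 0) (q 1 - k)
  left_inv p := by ext i; fin_cases i <;> (simp; try ring)
  right_inv q := by ext i; fin_cases i <;> (simp; try ring)
  isometry_toFun := by
    apply Isometry.of_dist_eq
    intro p q
    simp only [EuclideanSpace.dist_eq, Fin.sum_univ_two, Real.dist_eq]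
    simp only [pt_apply_0, pt_apply_1]
    congr 1
    rw [sq_abs, sq_abs, sq_abs, sq_abs]
    ring

/-- rotation-translation: (x,y) ↦ (y+k+1, k+1-x) -/
def G (k : ℝ) : Pt ≃ᵢ Pt where
  toFun p := pt (p 1 + k + 1) (k + 1 - p 0)
  invFun q := pt (k + 1 - q 1) (q 0 - k - 1)
  left_inv p := by ext i; fin_cases i <;> (simp; try ring)
  right_inv q := by ext i; fin_cases i <;> (simp; try ring)
  isometry_toFun := by
    apply Isometry.of_dist_eq
    intro p q
    simp only [EuclideanSpace.dist_eq, Fin.sum_univ_two, Real.dist_eq]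
    simp only [pt_apply_0, pt_apply_1]
    congr 1
    rw [sq_abs, sq_abs, sq_abs, sq_abs]
    ring

lemma image_isoequiv (e : Pt ≃ᵢ Pt) (s : Set Pt) : e '' s = e.symm ⁻¹' s := by
  ext p; simp [Set.mem_image, Set.mem_preimage]
  constructor
  · rintro ⟨q, hq, rfl⟩; simpa using hq
  · intro h; exact ⟨e.symm p, h, by simp⟩

lemma F_symm_apply (k : ℝ) (p : Pt) : (F k).symm p = pt (k + 1 - p 0) (p 1 - k) := rfl
lemma G_symm_apply (k : ℝ) (p : Pt) : (G k).symm p = pt (k + 1 - p 1) (p 0 - k - 1) := rfl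

lemma F_image_T (k : ℝ) :
    F k '' T = {p : Pt | p 0 ≤ k + 1 ∧ k ≤ p 1 ∧ p 1 ≤ p 0} := by
  rw [image_isoequiv, T_eq]
  ext p
  simp only [Set.mem_preimage, F_symm_apply, Set.mem_setOf_eq, pt_apply_0, pt_apply_1]
  constructor <;> (rintro ⟨h1, h2, h3⟩; refine ⟨by linarith, by linarith, by linarith⟩)

lemma G_image_T (k : ℝ) :
    G k '' T = {p : Pt | k + 1 ≤ p 0 ∧ p 1 ≤ k + 1 ∧ p 0 ≤ p 1 + 1} := by
  rw [image_isoequiv, T_eq]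
  ext p
  simp only [Set.mem_preimage, G_symm_apply, Set.mem_setOf_eq, pt_apply_0, pt_apply_1]
  constructor <;> (rintro ⟨h1, h2, h3⟩; refine ⟨by linarith, by linarith, by linarith⟩)

lemma F_interior (k : ℝ) :
    interior (F k '' T) = {p : Pt | p 0 < k + 1 ∧ k < p 1 ∧ p 1 < p 0} := by
  rw [show (⇑(F k)) = ⇑(F k).toHomeomorph from rfl, ← Homeomorph.image_interior, interior_T,
    show (⇑(F k).toHomeomorph) = ⇑(F k) from rfl, image_isoequiv]
  ext p
  simp only [Set.mem_preimage]
  constructor <;>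
    (intro h; obtain ⟨h1, h2, h3⟩ := h; simp only [F_symm_apply, pt_apply_0, pt_apply_1,
      Set.mem_setOf_eq] at *; refine ⟨by linarith, by linarith, by linarith⟩)

lemma G_interior (k : ℝ) :
    interior (G k '' T) = {p : Pt | k + 1 < p 0 ∧ p 1 < k + 1 ∧ p 0 < p 1 + 1} := by
  rw [show (⇑(G k)) = ⇑(G k).toHomeomorph from rfl, ← Homeomorph.image_interior, interior_T,
    show (⇑(G k).toHomeomorph) = ⇑(G k) from rfl, image_isoequiv]
  ext p
  simp only [Set.mem_preimage]
  constructor <;>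
    (intro h; obtain ⟨h1, h2, h3⟩ := h; simp only [G_symm_apply, pt_apply_0, pt_apply_1,
      Set.mem_setOf_eq] at *; refine ⟨by linarith, by linarith, by linarith⟩)

lemma para_eq (n : ℕ) (hn : 0 < n) :
    convexHull ℝ {pt 0 0, pt 1 0, pt ((n : ℝ) + 1) (n : ℝ), pt (n : ℝ) (n : ℝ)}
      = {p : Pt | 0 ≤ p 1 ∧ p 1 ≤ n ∧ p 1 ≤ p 0 ∧ p 0 ≤ p 1 + 1} := by
  have hn' : (0:ℝ) < n := by exact_mod_cast hn
  apply le_antisymm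
  · apply convexHull_min
    · rintro p (rfl | rfl | rfl | rfl) <;> simp <;> constructor <;> linarith
    · rintro p hp q hq a b ha hb hab
      obtain ⟨h1, h2, h3, h4⟩ := hp
      obtain ⟨g1, g2, g3, g4⟩ := hq
      refine ⟨?_, ?_, ?_, ?_⟩ <;>
        simp only [PiLp.add_apply, PiLp.smul_apply, smul_eq_mul] <;> nlinarith
  · rintro p ⟨h1, h2, h3, h4⟩
    have key := Finset.centerMass_mem_convexHull (t := (Finset.univ : Finset (Fin 4)))
      (w := ![(1 - p 1 / n) * (1 - (p 0 - p 1)), (1 - p 1 / n) * (p 0 - p 1),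
        (p 1 / n) * (p 0 - p 1), (p 1 / n) * (1 - (p 0 - p 1))])
      (z := ![pt 0 0, pt 1 0, pt ((n : ℝ) + 1) (n : ℝ), pt (n : ℝ) (n : ℝ)])
      (R := ℝ) (s := {pt 0 0, pt 1 0, pt ((n : ℝ) + 1) (n : ℝ), pt (n : ℝ) (n : ℝ)})
      (by
        have hd : 0 ≤ p 1 / n := div_nonneg h1 hn'.le
        have hd2 : p 1 / n ≤ 1 := by rw [div_le_one hn']; exact h2
        intro i _; fin_cases i <;> simp <;> nlinarith)
      (by
        simp [Fin.sum_univ_four]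
        ring_nf
        norm_num)
      (by intro i _; fin_cases i <;> simp [Set.mem_insert_iff])
    convert key using 1
    rw [Finset.centerMass_eq_of_sum_1]
    · ext i
      fin_cases i <;>
        (simp [Fin.sum_univ_four, PiLp.add_apply, PiLp.smul_apply]; field_simp [hn'.ne']; ring)
    · simp [Fin.sum_univ_four]; ring

lemma dFF (k l : ℕ) (h : k ≠ l) :
    Disjoint (interior (F (k:ℝ) '' T)) (interior (F (l:ℝ) '' T)) := by
  rw [F_interior, F_interior, Set.disjoint_left]
  rintro p ⟨a1, a2, a3⟩ ⟨b1, b2, b3⟩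
  have h1 : (k:ℝ) < (l:ℝ) + 1 := by linarith
  have h2 : (l:ℝ) < (k:ℝ) + 1 := by linarith
  have h1' : k < l + 1 := by exact_mod_cast h1
  have h2' : l < k + 1 := by exact_mod_cast h2
  omega

lemma dGG (k l : ℕ) (h : k ≠ l) :
    Disjoint (interior (G (k:ℝ) '' T)) (interior (G (l:ℝ) '' T)) := by
  rw [G_interior, G_interior, Set.disjoint_left]
  rintro p ⟨a1, a2, a3⟩ ⟨b1, b2, b3⟩
  have h1 : (k:ℝ) < (l:ℝ) + 1 := by linarith
  have h2 : (l:ℝ) < (k:ℝ) + 1 := by linarith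
  have h1' : k < l + 1 := by exact_mod_cast h1
  have h2' : l < k + 1 := by exact_mod_cast h2
  omega

lemma dFG (k l : ℕ) :
    Disjoint (interior (F (k:ℝ) '' T)) (interior (G (l:ℝ) '' T)) := by
  rw [F_interior, G_interior, Set.disjoint_left]
  rintro p ⟨a1, a2, a3⟩ ⟨b1, b2, b3⟩
  have h1 : (k:ℝ) < (l:ℝ) + 1 := by linarith
  have h2 : (l:ℝ) < (k:ℝ) := by linarith
  have h1' : k < l + 1 := by exact_mod_cast h1
  have h2' : l < k := by exact_mod_cast h2
  omega

theorem thin_parallelogram_family_tileable' (n : ℕ) (hn : 0 < n) :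
    ∃ f : Fin (2*n) → (Pt ≃ᵢ Pt),
    (∀ i j, i ≠ j → Disjoint (interior (f i '' T)) (interior (f j '' T))) ∧
    (convexHull ℝ {pt 0 0, pt 1 0, pt ((n : ℝ) + 1) (n : ℝ), pt (n : ℝ) (n : ℝ)}) = ⋃ i, f i '' T := by
  refine ⟨fun i => if i.val % 2 = 0 then F (↑(i.val / 2)) else G (↑(i.val / 2)), ?_, ?_⟩
  · intro i j hij
    rcases Nat.even_or_odd i.val with hi | hi <;> rcases Nat.even_or_odd j.val with hj | hj
    · have hi' : i.val % 2 = 0 := Nat.even_iff.mp hi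
      have hj' : j.val % 2 = 0 := Nat.even_iff.mp hj
      simp only [hi', hj', if_pos rfl]
      exact dFF _ _ (by intro h; exact hij (Fin.ext (by omega)))
    · have hi' : i.val % 2 = 0 := Nat.even_iff.mp hi
      have hj' : j.val % 2 = 1 := Nat.odd_iff.mp hj
      simp only [hi', hj']
      norm_num
      exact dFG _ _
    · have hi' : i.val % 2 = 1 := Nat.odd_iff.mp hi
      have hj' : j.val % 2 = 0 := Nat.even_iff.mp hj
      simp only [hi', hj']
      norm_num
      exact (dFG _ _).symm
    · have hi' : i.val % 2 = 1 := Nat.odd_iff.mp hi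
      have hj' : j.val % 2 = 1 := Nat.odd_iff.mp hj
      simp only [hi', hj']
      norm_num
      exact dGG _ _ (by intro h; exact hij (Fin.ext (by omega)))
  · rw [para_eq n hn]
    ext p
    simp only [Set.mem_iUnion, Set.mem_setOf_eq]
    constructor
    · rintro ⟨h1, h2, h3, h4⟩
      set k : ℕ := min (n-1) (Nat.floor (p 1)) with hk
      have hkn : k ≤ n - 1 := min_le_left _ _
      have hk1 : (k:ℝ) ≤ p 1 := le_trans (by exact_mod_cast min_le_right _ _) (Nat.floor_le h1)
      have hk2 : p 1 ≤ (k:ℝ) + 1 := by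
        rcases le_or_gt (Nat.floor (p 1)) (n-1) with h | h
        · have : k = Nat.floor (p 1) := by omega
          rw [this]
          exact (Nat.lt_floor_add_one (p 1)).le
        · have hnk : k = n - 1 := by omega
          have : (n:ℝ) ≤ Nat.floor (p 1) := by exact_mod_cast (by omega : n ≤ Nat.floor (p 1))
          have hfl : (Nat.floor (p 1) : ℝ) ≤ p 1 := Nat.floor_le h1
          have : ((k:ℝ) + 1) = n := by
            rw [hnk]
            push_cast [Nat.cast_sub hn]
            ring
          linarith
      have hkn' : (k:ℝ) + 1 ≤ n := by
        have : k + 1 ≤ n := by omega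
        exact_mod_cast this
      rcases le_or_gt (p 0) ((k:ℝ) + 1) with h | h
      · refine ⟨⟨2*k, by omega⟩, ?_⟩
        have e0 : (2*k) % 2 = 0 := by omega
        have e1 : (2*k) / 2 = k := by omega
        simp only [e0, e1, reduceIte]
        rw [show (fun a => (F ((k:ℕ):ℝ)) a) = ⇑(F ((k:ℕ):ℝ)) from rfl, F_image_T]
        exact ⟨h, hk1, h3⟩
      · refine ⟨⟨2*k+1, by omega⟩, ?_⟩
        have e0 : (2*k+1) % 2 = 1 := by omega
        have e1 : (2*k+1) / 2 = k := by omega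
        simp only [e0, e1, show (((1:ℕ) = 0) = False) by simp, if_false]
        rw [show (fun a => (G ((k:ℕ):ℝ)) a) = ⇑(G ((k:ℕ):ℝ)) from rfl, G_image_T]
        exact ⟨h.le, hk2, h4⟩
    · rintro ⟨i, hi⟩
      have hik : i.val / 2 < n := by omega
      have hik' : ((i.val / 2 : ℕ) : ℝ) + 1 ≤ n := by exact_mod_cast (by omega : i.val/2 + 1 ≤ n)
      have hik0 : (0:ℝ) ≤ ((i.val / 2 : ℕ) : ℝ) := Nat.cast_nonneg _
      by_cases hp : i.val % 2 = 0
      · rw [if_pos hp, F_image_T] at hi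
        obtain ⟨a1, a2, a3⟩ := hi
        exact ⟨by linarith, by linarith, a3, by linarith⟩
      · rw [if_neg hp, G_image_T] at hi
        obtain ⟨a1, a2, a3⟩ := hi
        exact ⟨by linarith, by linarith, by linarith, a3⟩

/-- For every positive integer `n`, the parallelogram with side lengths `1` and `n√2`
is tileable by `2n` copies of `T`. -/
theorem thin_parallelogram_family_tileable (n : ℕ) (hn : 0 < n) :
    TileableBy (convexHull ℝ {pt 0 0, pt 1 0, pt ((n : ℝ) + 1) (n : ℝ), pt (n : ℝ) (n : ℝ)})
      (2 * n) := by
  exact thin_parallelogram_family_tileable' n hn
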